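/- Let K be a positive integer and let (μ, Ω, Λ) and (μ̃, Ω̃, Λ̃) be MSN parameters: μ, μ̃, Λ, Λ̃ ∈ ℝ^K and Ω, Ω̃ K×K positive definite, with Δ = Ω^{1/2}·Λ/√(1+ΛᵀΛ), Γ = Ω − ΔΔᵀ, and analogously Δ̃, Γ̃. Let CF and C̃F denote the corresponding MSN characteristic functions CF(t) = exp(i·tᵀμ − ½·tᵀΩt)·(1 + i·ℑ(Δᵀt)) and C̃F(t) = exp(i·tᵀμ̃ − ½·tᵀΩ̃t)·(1 + i·ℑ(Δ̃ᵀt)). For every t ∈ ℝ^K with tᵀ(Γ − Γ̃)t ≠ 0, either lim_{c→∞} CF(ct)/C̃F(ct) = 0 or lim_{c→∞} |CF(ct)/C̃F(ct)| = ∞. -/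

import Mathlib

open Filter Matrix

noncomputable section

/-- ℑ(x) = ∫₀ˣ √(2/π)·exp(u²/2) du. -/
def ImInt (x : ℝ) : ℝ := ∫ u in (0:ℝ)..x, Real.sqrt (2 / Real.pi) * Real.exp (u ^ 2 / 2)

/-- The square root of a positive semidefinite matrix, as defined in the older Mathlib
(`Matrix.PosSemidef.sqrt`, removed since). -/
def Matrix.PosSemidef.sqrt {n : Type*} [Fintype n] [DecidableEq n] {A : Matrix n n ℝ}
    (hA : A.PosSemidef) : Matrix n n ℝ :=
  (hA.1.eigenvectorUnitary : Matrix n n ℝ) * diagonal (Real.sqrt ∘ hA.1.eigenvalues) *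
    (star hA.1.eigenvectorUnitary : Matrix n n ℝ)

/-- The Δ parameter of MSN(μ, Ω, Λ): Δ = Ω^{1/2}·Λ/√(1+ΛᵀΛ). -/
def msnDelta {K : ℕ} (Ω : Matrix (Fin K) (Fin K) ℝ) (hΩ : Ω.PosDef)
    (Λ : Fin K → ℝ) : Fin K → ℝ :=
  (Real.sqrt (1 + Λ ⬝ᵥ Λ))⁻¹ • hΩ.posSemidef.sqrt.mulVec Λ

/-- The Γ parameter of MSN(μ, Ω, Λ): Γ = Ω − ΔΔᵀ. -/
def msnGamma {K : ℕ} (Ω : Matrix (Fin K) (Fin K) ℝ) (hΩ : Ω.PosDef)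
    (Λ : Fin K → ℝ) : Matrix (Fin K) (Fin K) ℝ :=
  Ω - vecMulVec (msnDelta Ω hΩ Λ) (msnDelta Ω hΩ Λ)

/-- The MSN characteristic function. -/
def msnCF {K : ℕ} (μ : Fin K → ℝ) (Ω : Matrix (Fin K) (Fin K) ℝ) (hΩ : Ω.PosDef)
    (Λ : Fin K → ℝ) (t : Fin K → ℝ) : ℂ :=
  Complex.exp (Complex.I * ((t ⬝ᵥ μ : ℝ) : ℂ) - ((t ⬝ᵥ Ω.mulVec t / 2 : ℝ) : ℂ)) *
    (1 + Complex.I * ((ImInt (msnDelta Ω hΩ Λ ⬝ᵥ t) : ℝ) : ℂ))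

lemma contf : Continuous (fun u : ℝ => Real.sqrt (2 / Real.pi) * Real.exp (u ^ 2 / 2)) := by
  continuity

lemma intf (a b : ℝ) : IntervalIntegrable (fun u : ℝ => Real.sqrt (2 / Real.pi) * Real.exp (u ^ 2 / 2)) MeasureTheory.volume a b := contf.intervalIntegrable a b

lemma imInt_neg (x : ℝ) : ImInt (-x) = - ImInt x := by
  have h := intervalIntegral.integral_comp_neg (a:=(0:ℝ)) (b:=x) (f := fun u => Real.sqrt (2 / Real.pi) * Real.exp (u ^ 2 / 2))
  simp only [neg_sq, neg_zero] at h
  unfold ImInt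
  rw [intervalIntegral.integral_symm, ← h]

lemma imInt_nonneg {x : ℝ} (hx : 0 ≤ x) : 0 ≤ ImInt x :=
  intervalIntegral.integral_nonneg hx (fun u _ => by positivity)

lemma imInt_upper {x : ℝ} (hx : 0 ≤ x) :
    ImInt x ≤ Real.sqrt (2 / Real.pi) * x * Real.exp (x ^ 2 / 2) := by
  have h := intervalIntegral.integral_mono_on (f := fun u : ℝ => Real.sqrt (2 / Real.pi) * Real.exp (u ^ 2 / 2)) (g := fun _ : ℝ => Real.sqrt (2 / Real.pi) * Real.exp (x ^ 2 / 2)) hx (intf 0 x) (intervalIntegrable_const) ?_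
  · refine h.trans_eq ?_
    rw [intervalIntegral.integral_const]
    simp; ring
  · intro u hu
    have h1 : u ^ 2 ≤ x ^ 2 := by nlinarith [hu.1, hu.2]
    have := Real.exp_le_exp.mpr (by linarith : u^2/2 ≤ x^2/2)
    have h2 : (0:ℝ) ≤ Real.sqrt (2/Real.pi) := Real.sqrt_nonneg _
    nlinarith

lemma imInt_lower {x : ℝ} (hx : 1 ≤ x) :
    Real.sqrt (2 / Real.pi) * Real.exp ((x - 1) ^ 2 / 2) ≤ ImInt x := by
  have hadd := intervalIntegral.integral_add_adjacent_intervals (intf 0 (x-1)) (intf (x-1) x)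
  have h1 : 0 ≤ ∫ u in (0:ℝ)..(x-1), Real.sqrt (2 / Real.pi) * Real.exp (u ^ 2 / 2) :=
    intervalIntegral.integral_nonneg (by linarith) (fun u _ => by positivity)
  have h2 : Real.sqrt (2 / Real.pi) * Real.exp ((x - 1) ^ 2 / 2) ≤
      ∫ u in (x-1)..x, Real.sqrt (2 / Real.pi) * Real.exp (u ^ 2 / 2) := by
    have h := intervalIntegral.integral_mono_on (f := fun _ : ℝ => Real.sqrt (2 / Real.pi) * Real.exp ((x-1) ^ 2 / 2)) (g := fun u : ℝ => Real.sqrt (2 / Real.pi) * Real.exp (u ^ 2 / 2)) (by linarith : x - 1 ≤ x) intervalIntegrable_const (intf (x-1) x) ?_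
    · refine le_trans ?_ h
      rw [intervalIntegral.integral_const]
      simp
    · intro u hu
      have h1 : (x-1) ^ 2 ≤ u ^ 2 := by nlinarith [hu.1, hu.2]
      have := Real.exp_le_exp.mpr (by linarith : (x-1)^2/2 ≤ u^2/2)
      have h2 : (0:ℝ) ≤ Real.sqrt (2/Real.pi) := Real.sqrt_nonneg _
      nlinarith
  unfold ImInt
  linarith [hadd]


lemma abs_msnCF {K : ℕ} (μ : Fin K → ℝ) (Ω : Matrix (Fin K) (Fin K) ℝ) (hΩ : Ω.PosDef)
    (Λ : Fin K → ℝ) (v : Fin K → ℝ) :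
    ‖msnCF μ Ω hΩ Λ v‖ =
      Real.exp (-(v ⬝ᵥ Ω.mulVec v) / 2) *
        Real.sqrt (1 + ImInt (msnDelta Ω hΩ Λ ⬝ᵥ v) ^ 2) := by
  unfold msnCF
  rw [norm_mul, Complex.norm_exp]
  congr 1
  · congr 1
    simp [Complex.sub_re, Complex.mul_re]
    ring
  · rw [Complex.norm_def, Complex.normSq_apply]
    congr 1
    simp
    ring

lemma quadform_vecMulVec {K : ℕ} (w t : Fin K → ℝ) :
    t ⬝ᵥ (vecMulVec w w).mulVec t = (w ⬝ᵥ t) ^ 2 := by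
  simp only [dotProduct, mulVec, vecMulVec, Matrix.of_apply, pow_two, Finset.mul_sum,
    Finset.sum_mul]
  rw [Finset.sum_comm]
  exact Finset.sum_congr rfl fun i _ => Finset.sum_congr rfl fun j _ => by ring

lemma sqrtpi_le_one : Real.sqrt (2 / Real.pi) ≤ 1 := by
  rw [show (1:ℝ) = Real.sqrt 1 by simp]
  apply Real.sqrt_le_sqrt
  rw [div_le_one Real.pi_pos]
  linarith [Real.pi_gt_three]

lemma sqrtpi_pos : 0 < Real.sqrt (2 / Real.pi) :=
  Real.sqrt_pos.mpr (by positivity)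

lemma key_low {y : ℝ} (hy : y = 0 ∨ 1 ≤ y) :
    Real.sqrt (2 / Real.pi) * Real.exp (y ^ 2 / 2 - y) ≤ Real.sqrt (1 + ImInt y ^ 2) := by
  rcases hy with h | h
  · subst h
    have h0 : ImInt 0 = 0 := by unfold ImInt; simp
    norm_num [h0]
    rw [div_le_one (Real.sqrt_pos.mpr Real.pi_pos)]
    exact Real.sqrt_le_sqrt (by linarith [Real.pi_gt_three])
  · have h1 : Real.sqrt (2 / Real.pi) * Real.exp ((y - 1) ^ 2 / 2) ≤ ImInt y := imInt_lower h
    have h2 : ImInt y ≤ Real.sqrt (1 + ImInt y ^ 2) := by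
      have := Real.sqrt_le_sqrt (show ImInt y ^ 2 ≤ 1 + ImInt y ^ 2 by linarith)
      rwa [Real.sqrt_sq (imInt_nonneg (by linarith))] at this
    refine le_trans (le_trans ?_ h1) h2
    have := Real.exp_le_exp.mpr (show y ^ 2 / 2 - y ≤ (y - 1) ^ 2 / 2 by nlinarith)
    nlinarith [sqrtpi_pos]

lemma key_up {y : ℝ} (hy : 0 ≤ y) :
    Real.sqrt (1 + ImInt y ^ 2) ≤
      Real.exp (Real.sqrt (2 / Real.pi) * y) * Real.exp (y ^ 2 / 2) := by
  have h0 : 0 ≤ ImInt y := imInt_nonneg hy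
  have h1 : Real.sqrt (1 + ImInt y ^ 2) ≤ 1 + ImInt y := by
    rw [show (1:ℝ) + ImInt y = Real.sqrt ((1 + ImInt y)^2) from (Real.sqrt_sq (by linarith)).symm]
    apply Real.sqrt_le_sqrt; nlinarith
  have h2 : ImInt y ≤ Real.sqrt (2 / Real.pi) * y * Real.exp (y ^ 2 / 2) := imInt_upper hy
  have h3 : (1:ℝ) ≤ Real.exp (y^2/2) := Real.one_le_exp (by positivity)
  have h4 : 1 + Real.sqrt (2 / Real.pi) * y ≤ Real.exp (Real.sqrt (2 / Real.pi) * y) := by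
    linarith [Real.add_one_le_exp (Real.sqrt (2 / Real.pi) * y)]
  have h5 : 0 ≤ Real.sqrt (2 / Real.pi) * y := by positivity
  nlinarith

lemma imInt_sq_abs {c d : ℝ} (hc : 0 ≤ c) : ImInt (c * d) ^ 2 = ImInt (c * |d|) ^ 2 := by
  rcases le_or_gt 0 d with h | h
  · rw [abs_of_nonneg h]
  · rw [abs_of_neg h, mul_neg, imInt_neg, neg_sq]

lemma tendsto_aux_top (k a b : ℝ) (ha : 0 < a) :
    Tendsto (fun c : ℝ => Real.exp (k + (a * c ^ 2 + b * c))) atTop atTop := by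
  apply Real.tendsto_exp_atTop.comp
  apply tendsto_atTop_mono' atTop _ tendsto_id
  filter_upwards [eventually_ge_atTop ((|b| + |k| + 1) / a), eventually_ge_atTop 1] with c h1 h2
  have h3 : |b| + |k| + 1 ≤ a * c := by rw [div_le_iff₀ ha] at h1; linarith
  have hc : (0:ℝ) ≤ c := by linarith
  simp only [id]
  nlinarith [mul_le_mul_of_nonneg_right h3 hc, neg_abs_le b, neg_abs_le k,
    mul_nonneg (by linarith [neg_abs_le b] : (0:ℝ) ≤ |b| + b) hc,
    mul_le_mul_of_nonneg_left h2 (abs_nonneg k)]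

lemma tendsto_aux_zero (k a b : ℝ) (ha : a < 0) :
    Tendsto (fun c : ℝ => Real.exp (k + (a * c ^ 2 + b * c))) atTop (nhds 0) := by
  apply Real.tendsto_exp_atBot.comp
  apply tendsto_atBot_mono' atTop _ tendsto_neg_atTop_atBot
  filter_upwards [eventually_ge_atTop ((|b| + |k| + 1) / (-a)), eventually_ge_atTop 1] with c h1 h2
  have h3 : |b| + |k| + 1 ≤ -a * c := by
    rw [div_le_iff₀ (by linarith : (0:ℝ) < -a)] at h1; linarith
  have hc : (0:ℝ) ≤ c := by linarith
  nlinarith [mul_le_mul_of_nonneg_right h3 hc, le_abs_self b, le_abs_self k,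
    mul_nonneg (by linarith [le_abs_self b] : (0:ℝ) ≤ |b| - b) hc,
    mul_le_mul_of_nonneg_left h2 (abs_nonneg k)]

set_option maxHeartbeats 1000000

theorem stmt13 (K : ℕ) (hK : 0 < K)
    (μ Λ μ' Λ' : Fin K → ℝ) (Ω Ω' : Matrix (Fin K) (Fin K) ℝ)
    (hΩ : Ω.PosDef) (hΩ' : Ω'.PosDef) :
    ∀ t : Fin K → ℝ, t ⬝ᵥ (msnGamma Ω hΩ Λ - msnGamma Ω' hΩ' Λ').mulVec t ≠ 0 →
      Tendsto (fun c : ℝ => msnCF μ Ω hΩ Λ (c • t) / msnCF μ' Ω' hΩ' Λ' (c • t))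
        atTop (nhds 0) ∨
      Tendsto (fun c : ℝ =>
          ‖msnCF μ Ω hΩ Λ (c • t) / msnCF μ' Ω' hΩ' Λ' (c • t)‖)
        atTop atTop := by
  intro t ht
  have hπ := sqrtpi_pos
  set D : ℝ := msnDelta Ω hΩ Λ ⬝ᵥ t with hDdef
  set D' : ℝ := msnDelta Ω' hΩ' Λ' ⬝ᵥ t with hD'def
  set A : ℝ := t ⬝ᵥ Ω.mulVec t with hAdef
  set A' : ℝ := t ⬝ᵥ Ω'.mulVec t with hA'def
  set s : ℝ := (A - D ^ 2) - (A' - D' ^ 2) with hsdef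
  have hs : s ≠ 0 := by
    have : t ⬝ᵥ (msnGamma Ω hΩ Λ - msnGamma Ω' hΩ' Λ').mulVec t = s := by
      unfold msnGamma
      simp only [Matrix.sub_mulVec, dotProduct_sub, quadform_vecMulVec, hsdef]
      rfl
    rwa [this] at ht
  set κ : ℝ := Real.log (Real.sqrt (2 / Real.pi)) with hκdef
  have hκ : Real.exp κ = Real.sqrt (2 / Real.pi) := Real.exp_log hπ
  set β : ℝ := (1 + Real.sqrt (2 / Real.pi)) * (|D| + |D'|) with hβdef
  set F : ℝ → ℝ := fun c =>
      (Real.exp (-(c ^ 2 * A) / 2) * Real.sqrt (1 + ImInt (c * D) ^ 2)) /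
        (Real.exp (-(c ^ 2 * A') / 2) * Real.sqrt (1 + ImInt (c * D') ^ 2)) with hFdef
  have hfun : (fun c : ℝ => ‖msnCF μ Ω hΩ Λ (c • t) / msnCF μ' Ω' hΩ' Λ' (c • t)‖)
      = F := by
    funext c
    rw [norm_div, abs_msnCF, abs_msnCF, hFdef]
    have h1 : (c • t) ⬝ᵥ Ω.mulVec (c • t) = c ^ 2 * A := by
      rw [Matrix.mulVec_smul, dotProduct_smul, smul_dotProduct, smul_eq_mul, smul_eq_mul, hAdef]
      ring
    have h2 : (c • t) ⬝ᵥ Ω'.mulVec (c • t) = c ^ 2 * A' := by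
      rw [Matrix.mulVec_smul, dotProduct_smul, smul_dotProduct, smul_eq_mul, smul_eq_mul, hA'def]
      ring
    have h3 : msnDelta Ω hΩ Λ ⬝ᵥ (c • t) = c * D := by
      rw [dotProduct_smul, smul_eq_mul, hDdef]
    have h4 : msnDelta Ω' hΩ' Λ' ⬝ᵥ (c • t) = c * D' := by
      rw [dotProduct_smul, smul_eq_mul, hD'def]
    rw [h1, h2, h3, h4]
  -- the two eventual bounds
  have hbound : ∀ᶠ c : ℝ in atTop,
      Real.exp (κ + ((-(s / 2)) * c ^ 2 + (-β) * c)) ≤ F c ∧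
        F c ≤ Real.exp (-κ + ((-(s / 2)) * c ^ 2 + β * c)) := by
    filter_upwards [eventually_ge_atTop (1 : ℝ), eventually_ge_atTop |D|⁻¹,
      eventually_ge_atTop |D'|⁻¹] with c hc1 hc2 hc3
    have hc0 : (0 : ℝ) ≤ c := by linarith
    have hcond : ∀ d : ℝ, |d|⁻¹ ≤ c → (c * |d| = 0 ∨ 1 ≤ c * |d|) := by
      intro d hd
      rcases eq_or_ne d 0 with h | h
      · left; simp [h]
      · right
        have hpos : 0 < |d| := abs_pos.mpr h
        calc (1:ℝ) = |d|⁻¹ * |d| := (inv_mul_cancel₀ hpos.ne').symm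
        _ ≤ c * |d| := mul_le_mul_of_nonneg_right hd hpos.le
    -- bounds on the sqrt factors, with exponents in polynomial form
    have habs2 : ∀ d : ℝ, (c * |d|) ^ 2 = c ^ 2 * d ^ 2 := fun d => by
      rw [mul_pow, sq_abs]
    have l1 : Real.exp (κ + (c ^ 2 * D ^ 2 / 2 - c * |D|)) ≤ Real.sqrt (1 + ImInt (c * D) ^ 2) := by
      rw [imInt_sq_abs hc0, Real.exp_add, hκ]
      have := key_low (hcond D hc2)
      rwa [habs2 D] at this
    have l2 : Real.exp (κ + (c ^ 2 * D' ^ 2 / 2 - c * |D'|)) ≤ Real.sqrt (1 + ImInt (c * D') ^ 2) := by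
      rw [imInt_sq_abs hc0, Real.exp_add, hκ]
      have := key_low (hcond D' hc3)
      rwa [habs2 D'] at this
    have u1 : Real.sqrt (1 + ImInt (c * D) ^ 2) ≤
        Real.exp (Real.sqrt (2 / Real.pi) * (c * |D|) + c ^ 2 * D ^ 2 / 2) := by
      rw [imInt_sq_abs hc0, Real.exp_add]
      have := key_up (show (0:ℝ) ≤ c * |D| by positivity)
      rwa [habs2 D] at this
    have u2 : Real.sqrt (1 + ImInt (c * D') ^ 2) ≤
        Real.exp (Real.sqrt (2 / Real.pi) * (c * |D'|) + c ^ 2 * D' ^ 2 / 2) := by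
      rw [imInt_sq_abs hc0, Real.exp_add]
      have := key_up (show (0:ℝ) ≤ c * |D'| by positivity)
      rwa [habs2 D'] at this
    have hS1pos : (0:ℝ) < Real.sqrt (1 + ImInt (c * D) ^ 2) := Real.sqrt_pos.mpr (by positivity)
    have hS2pos : (0:ℝ) < Real.sqrt (1 + ImInt (c * D') ^ 2) := Real.sqrt_pos.mpr (by positivity)
    constructor
    · -- lower bound
      have step1 : (Real.exp (-(c ^ 2 * A) / 2) * Real.exp (κ + (c ^ 2 * D ^ 2 / 2 - c * |D|))) /
          (Real.exp (-(c ^ 2 * A') / 2) *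
            Real.exp (Real.sqrt (2 / Real.pi) * (c * |D'|) + c ^ 2 * D' ^ 2 / 2)) ≤ F c := by
        rw [hFdef]
        apply div_le_div₀ (by positivity) (mul_le_mul_of_nonneg_left l1 (Real.exp_nonneg _))
          (by positivity) (mul_le_mul_of_nonneg_left u2 (Real.exp_nonneg _))
      refine le_trans ?_ step1
      rw [← Real.exp_add, ← Real.exp_add, ← Real.exp_sub, Real.exp_le_exp]
      have h5 : 0 ≤ c * |D'| := by positivity
      have h6 : 0 ≤ Real.sqrt (2 / Real.pi) * (c * |D|) := by positivity
      rw [hβdef, hsdef]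
      nlinarith [abs_nonneg D, abs_nonneg D', mul_nonneg hc0 (abs_nonneg D'),
        mul_nonneg (mul_nonneg hπ.le hc0) (abs_nonneg D)]
    · -- upper bound
      have step1 : F c ≤ (Real.exp (-(c ^ 2 * A) / 2) *
          Real.exp (Real.sqrt (2 / Real.pi) * (c * |D|) + c ^ 2 * D ^ 2 / 2)) /
          (Real.exp (-(c ^ 2 * A') / 2) * Real.exp (κ + (c ^ 2 * D' ^ 2 / 2 - c * |D'|))) := by
        rw [hFdef]
        apply div_le_div₀ (by positivity) (mul_le_mul_of_nonneg_left u1 (Real.exp_nonneg _))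
          (by positivity) (mul_le_mul_of_nonneg_left l2 (Real.exp_nonneg _))
      refine le_trans step1 ?_
      rw [← Real.exp_add, ← Real.exp_add, ← Real.exp_sub, Real.exp_le_exp]
      rw [hβdef, hsdef]
      nlinarith [mul_nonneg hc0 (abs_nonneg D),
        mul_nonneg (mul_nonneg hπ.le hc0) (abs_nonneg D')]
  rcases hs.lt_or_gt with hneg | hpos
  · -- s < 0 : |ratio| → ∞
    right
    rw [hfun]
    refine tendsto_atTop_mono' atTop ?_ (tendsto_aux_top κ (-(s / 2)) (-β) (by linarith))
    filter_upwards [hbound] with c hc using hc.1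
  · -- s > 0 : ratio → 0
    left
    rw [show (0 : ℂ) = 0 from rfl]
    rw [tendsto_zero_iff_norm_tendsto_zero]
    have : (fun c : ℝ => ‖msnCF μ Ω hΩ Λ (c • t) / msnCF μ' Ω' hΩ' Λ' (c • t)‖) = F := by
      rw [← hfun]
    rw [this]
    apply squeeze_zero' (g := fun c => Real.exp (-κ + ((-(s / 2)) * c ^ 2 + β * c)))
    · filter_upwards [hbound] with c hc
      rw [hFdef]
      positivity
    · filter_upwards [hbound] with c hc using hc.2
    · exact tendsto_aux_zero (-κ) (-(s / 2)) β (by linarith)
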